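/- arXiv:2411.09057 — 6 statements merged into one kernel-verified Lean document; each statement's English description precedes it below -/
import Mathlib

section
/- Let $d \geq 1$ and let $f \in L^1(\mathbb{R}^d) \cap L^2(\mathbb{R}^d)$ be not almost everywhere zero. Let $E, S \subset \mathbb{R}^d$ be measurable sets of finite Lebesgue measure. Suppose $f(x) = 0$ for almost every $x \notin E$ and $\widehat{f}(\xi) = 0$ for almost every $\xi \notin S$. Then $|E| \cdot |S| \geq 1$. -/
open MeasureTheory FourierTransform Real Complex
open scoped RealInnerProductSpace ENNReal ContDiff

section Aux

variable {V : Type*} [NormedAddCommGroup V] [InnerProductSpace ℝ V] [FiniteDimensional ℝ V]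
  [MeasurableSpace V] [BorelSpace V]

/-- A smooth compactly supported function is a Schwartz map. -/
noncomputable def mySchwartz (g : V → ℂ) (hg : ContDiff ℝ ∞ g)
    (hsupp : HasCompactSupport g) : SchwartzMap V ℂ where
  toFun := g
  smooth' := hg
  decay' := by
    intro k n
    obtain ⟨C, hC⟩ := Continuous.bounded_above_of_compact_support
      (f := fun x => ‖x‖ ^ k * ‖iteratedFDeriv ℝ n g x‖)
      (((continuous_norm).pow k).mul ((hg.continuous_iteratedFDeriv (mod_cast le_top)).norm))
      (((hsupp.iteratedFDeriv n).norm).mul_left)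
    refine ⟨C, fun x => ?_⟩
    have := hC x
    rwa [Real.norm_eq_abs, _root_.abs_of_nonneg (by positivity)] at this

/-- Multiplication formula for the Fourier transform. -/
lemma my_mult_formula {f g : V → ℂ} (hf : Integrable f volume) (hg : Integrable g volume) :
    ∫ ξ, 𝓕 f ξ * g ξ = ∫ x, f x * 𝓕 g x := by
  have hflip : (innerₗ V).flip = innerₗ V := by
    apply LinearMap.ext; intro x; apply LinearMap.ext; intro y
    simp only [LinearMap.flip_apply, innerₗ_apply_apply]
    exact real_inner_comm x y
  have h := VectorFourier.integral_fourierIntegral_smul_eq_flip (L := innerₗ V)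
    (ν := (volume : Measure V)) Real.continuous_fourierChar
    (by exact continuous_inner) hf hg
  rw [hflip] at h
  simp only [smul_eq_mul] at h
  exact h

end Aux

section Inv

variable {V : Type*} [NormedAddCommGroup V] [InnerProductSpace ℝ V] [FiniteDimensional ℝ V]
  [MeasurableSpace V] [BorelSpace V] [SecondCountableTopology V]

/-- Almost-everywhere Fourier inversion for integrable functions with integrable transform. -/
lemma my_ae_inversion {f : V → ℂ}
    (hf : Integrable f volume) (h'f : Integrable (𝓕 f) volume) :
    f =ᵐ[volume] 𝓕⁻ (𝓕 f) := by
  have hcont : Continuous (𝓕⁻ (𝓕 f)) := by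
    apply VectorFourier.fourierIntegral_continuous Real.continuous_fourierChar
      (by exact (Continuous.neg continuous_inner)) h'f
  apply ae_eq_of_integral_contDiff_smul_eq hf.locallyIntegrable hcont.locallyIntegrable
  intro g hg hgsupp
  set gc : V → ℂ := fun x => (g x : ℂ) with hgc
  have hgc_smooth : ContDiff ℝ ∞ gc := Complex.ofRealCLM.contDiff.comp hg
  have hgc_supp : HasCompactSupport gc :=
    hgsupp.comp_left (g := Complex.ofReal) Complex.ofReal_zero
  set φ := mySchwartz gc hgc_smooth hgc_supp with hφ
  set ψ := (FourierTransform.fourierCLE ℂ (SchwartzMap V ℂ)).symm φ with hψ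
  have hφf : (φ : V → ℂ) = gc := rfl
  have hψcoe : ⇑ψ = 𝓕⁻ gc := by rw [hψ, SchwartzMap.fourierTransformCLE_symm_apply, SchwartzMap.fourierInv_coe, hφf]
  have hφcoe : 𝓕 ⇑ψ = gc := by
    have h2 : (FourierTransform.fourierCLE ℂ (SchwartzMap V ℂ)) ψ = φ :=
      (FourierTransform.fourierCLE ℂ (SchwartzMap V ℂ)).apply_symm_apply φ
    rw [← hφf, ← h2, SchwartzMap.fourierTransformCLE_apply, SchwartzMap.fourier_coe]
  have L1 : ∫ x, g x • f x = ∫ x, ψ x * 𝓕 f x := by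
    rw [← my_mult_formula ψ.integrable hf]
    congr 1; ext x
    rw [hφcoe, Complex.real_smul]
  have hG : Integrable (fun x => 𝓕 f (-x)) volume := h'f.comp_neg
  have R1 : ∫ x, g x • 𝓕⁻ (𝓕 f) x = ∫ ξ, ψ ξ * 𝓕 f ξ := by
    calc ∫ x, g x • 𝓕⁻ (𝓕 f) x
        = ∫ x, 𝓕 (fun y => 𝓕 f (-y)) x * gc x := by
          rw [Real.fourierInv_eq_fourier_comp_neg]
          congr 1; ext x
          rw [Complex.real_smul, mul_comm]
      _ = ∫ ξ, 𝓕 f (-ξ) * 𝓕 gc ξ := by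
          have := my_mult_formula hG (f := fun y => 𝓕 f (-y)) (g := gc)
            (SchwartzMap.integrable φ)
          exact this
      _ = ∫ ξ, 𝓕 f ξ * 𝓕 gc (-ξ) := by
          rw [← integral_neg_eq_self (fun ξ => 𝓕 f ξ * 𝓕 gc (-ξ)) volume]
          simp
      _ = ∫ ξ, ψ ξ * 𝓕 f ξ := by
          congr 1; ext ξ
          rw [hψcoe, Real.fourierInv_eq_fourier_neg, mul_comm]
  rw [L1, R1]

end Inv

/-- Uncertainty principle on ℝ^d: if `f ∈ L¹ ∩ L²` is nonzero, supported (a.e.) on `E`,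
and its Fourier transform is supported (a.e.) on `S`, both of finite Lebesgue measure,
then `|E| ⬝ |S| ≥ 1`. -/
theorem statement0 (d : ℕ) (hd : 1 ≤ d)
    (f : EuclideanSpace ℝ (Fin d) → ℂ)
    (hf1 : Integrable f volume) (hf2 : MemLp f 2 volume)
    (hf0 : ¬ (f =ᵐ[volume] 0))
    (E S : Set (EuclideanSpace ℝ (Fin d)))
    (hE : MeasurableSet E) (hS : MeasurableSet S)
    (hEfin : volume E < ⊤) (hSfin : volume S < ⊤)
    (hfE : ∀ᵐ x ∂volume, x ∉ E → f x = 0)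
    (hfS : ∀ᵐ ξ ∂volume, ξ ∉ S → 𝓕 f ξ = 0) :
    1 ≤ volume E * volume S := by
  set g := 𝓕 f with hgdef
  set I1 : ℝ≥0∞ := ∫⁻ x, ‖f x‖₊ ∂volume with hI1
  have hI1_top : I1 < ⊤ := hf1.2
  have hsm : ∀ (u : Circle) (z : ℂ), (‖u • z‖₊ : ℝ≥0∞) = (‖z‖₊ : ℝ≥0∞) := by
    intro u z
    congr 1
    ext
    exact Circle.norm_smul u z
  have hg_bound : ∀ ξ, (‖g ξ‖₊ : ℝ≥0∞) ≤ I1 := by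
    intro ξ
    calc (‖g ξ‖₊ : ℝ≥0∞)
        ≤ ∫⁻ x, ‖(𝐞 (-⟪x, ξ⟫) : Circle) • f x‖₊ ∂volume :=
          enorm_integral_le_lintegral_enorm _
      _ = I1 := by rw [hI1]; exact lintegral_congr fun x => hsm _ _
  have hgcont : Continuous g := by
    apply VectorFourier.fourierIntegral_continuous Real.continuous_fourierChar
      (by exact continuous_inner) hf1
  set I2 : ℝ≥0∞ := ∫⁻ ξ, ‖g ξ‖₊ ∂volume with hI2
  have hI2_S : I2 = ∫⁻ ξ in S, ‖g ξ‖₊ ∂volume := by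
    have hind : (fun ξ => (‖g ξ‖₊ : ℝ≥0∞))
        =ᵐ[volume] S.indicator (fun ξ => (‖g ξ‖₊ : ℝ≥0∞)) := by
      filter_upwards [hfS] with ξ h
      by_cases hξ : ξ ∈ S
      · rw [Set.indicator_of_mem hξ]
      · rw [Set.indicator_of_notMem hξ, h hξ]; simp
    rw [hI2, lintegral_congr_ae hind, lintegral_indicator hS]
  have hI2_le : I2 ≤ volume S * I1 := by
    calc I2 = ∫⁻ ξ in S, ‖g ξ‖₊ ∂volume := hI2_S
      _ ≤ ∫⁻ _ in S, I1 ∂volume := lintegral_mono fun ξ => hg_bound ξ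
      _ = volume S * I1 := by rw [setLIntegral_const, mul_comm]
  have hI2_top : I2 < ⊤ := lt_of_le_of_lt hI2_le (ENNReal.mul_lt_top hSfin hI1_top)
  have hgi : Integrable g volume := by
    refine ⟨hgcont.aestronglyMeasurable, ?_⟩
    show (∫⁻ ξ, ‖g ξ‖₊ ∂volume) < ⊤
    exact hI2_top
  have hae : f =ᵐ[volume] 𝓕⁻ g := my_ae_inversion hf1 hgi
  set M : ℝ≥0∞ := essSup (fun x => (‖f x‖₊ : ℝ≥0∞)) volume with hM
  have hinv_bound : ∀ x, (‖𝓕⁻ g x‖₊ : ℝ≥0∞) ≤ I2 := by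
    intro x
    rw [Real.fourierInv_eq]
    calc (‖∫ ξ, (𝐞 ⟪ξ, x⟫ : Circle) • g ξ‖₊ : ℝ≥0∞)
        ≤ ∫⁻ ξ, ‖(𝐞 ⟪ξ, x⟫ : Circle) • g ξ‖₊ ∂volume :=
          enorm_integral_le_lintegral_enorm _
      _ = I2 := by rw [hI2]; exact lintegral_congr fun ξ => hsm _ _
  have hM_le : M ≤ I2 := by
    have heq : M = essSup (fun x => (‖𝓕⁻ g x‖₊ : ℝ≥0∞)) volume := by
      apply essSup_congr_ae
      filter_upwards [hae] with x h
      rw [h]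
    rw [heq]
    exact essSup_le_of_ae_le _ (Filter.Eventually.of_forall hinv_bound)
  have hI1_le : I1 ≤ volume E * M := by
    have hind : (fun x => (‖f x‖₊ : ℝ≥0∞))
        =ᵐ[volume] E.indicator (fun x => (‖f x‖₊ : ℝ≥0∞)) := by
      filter_upwards [hfE] with x h
      by_cases hx : x ∈ E
      · rw [Set.indicator_of_mem hx]
      · rw [Set.indicator_of_notMem hx, h hx]; simp
    calc I1 = ∫⁻ x in E, ‖f x‖₊ ∂volume := by
          rw [hI1, lintegral_congr_ae hind, lintegral_indicator hE]
      _ ≤ ∫⁻ _ in E, M ∂volume := by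
          apply lintegral_mono_ae
          exact ae_restrict_of_ae (ENNReal.ae_le_essSup _)
      _ = volume E * M := by rw [setLIntegral_const, mul_comm]
  have hM0 : M ≠ 0 := by
    intro h
    apply hf0
    have hle := ENNReal.ae_le_essSup (μ := (volume : Measure (EuclideanSpace ℝ (Fin d))))
      (fun x => (‖f x‖₊ : ℝ≥0∞))
    rw [← hM, h] at hle
    filter_upwards [hle] with x hx
    simpa using hx
  have hMtop : M ≠ ⊤ := ne_top_of_le_ne_top hI2_top.ne hM_le
  have key : M ≤ (volume E * volume S) * M := by
    calc M ≤ I2 := hM_le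
      _ ≤ volume S * I1 := hI2_le
      _ ≤ volume S * (volume E * M) := mul_le_mul_right hI1_le _
      _ = (volume E * volume S) * M := by ring
  by_contra hlt
  push_neg at hlt
  have hcon : (volume E * volume S) * M < 1 * M :=
    ENNReal.mul_lt_mul_left hM0 hMtop hlt
  rw [one_mul] at hcon
  exact absurd key (not_le.2 hcon)
end

section
/- Let $(M, \mu)$ be a measure space, let $(e_j)_{j \in J}$ be an orthonormal family in $L^2(M, \mu)$, let $X_S \subset J$ be a finite subset, and let $E \subset M$ be measurable. Suppose $f \in L^2(M,\mu)$ is not almost everywhere zero, is $L^2$-concentrated on $E$ at level $L = (1-\epsilon^2)^{-1/2}$ (equivalently $\|f - 1_E f\|_{L^2} \leq \epsilon \|f\|_{L^2}$), and its Fourier coefficients $\widehat{f}(j) = \langle f, e_j \rangle$ are $\ell^2$-concentrated on $X_S$ at level $L' = (1-\epsilon'^2)^{-1/2}$ (equivalently $\|f - \sum_{j \in X_S} \widehat f(j) e_j\|_{L^2} \leq \epsilon' \|f\|_{L^2}$), where $0 \leq \epsilon, \epsilon' < 1$ and $\epsilon + \epsilon' < 1$. Then $\int_E \sum_{j \in X_S}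 |e_j(x)|^2 \, d\mu(x) \geq (1 - \epsilon - \epsilon')^2$. -/
open MeasureTheory

/-- Proposition (manifold-free form): if a nonzero `f ∈ L²` is `L²`-concentrated on `E`
and its Fourier coefficients are `ℓ²`-concentrated on the finite set `X_S`, then
`∫_E ∑_{j ∈ X_S} |e_j(x)|² dμ(x) ≥ (1 - ε - ε')²`. -/
theorem statement6 {M J : Type*} [MeasurableSpace M] [DecidableEq J] (μ : Measure M)
    (e : J → M → ℂ) (he2 : ∀ j, MemLp (e j) 2 μ)
    (horth : ∀ i j, ∫ x, e i x * (starRingEnd ℂ) (e j x) ∂μ = if i = j then 1 else 0)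
    (XS : Finset J) (E : Set M) (hE : MeasurableSet E)
    (f : M → ℂ) (hf : MemLp f 2 μ) (hf0 : ¬ (f =ᵐ[μ] 0))
    (ε ε' : ℝ) (hε0 : 0 ≤ ε) (hε1 : ε < 1) (hε'0 : 0 ≤ ε') (hε'1 : ε' < 1)
    (hsum : ε + ε' < 1)
    (hconc : eLpNorm (f - E.indicator f) 2 μ ≤ ENNReal.ofReal ε * eLpNorm f 2 μ)
    (hspec : eLpNorm
        (f - fun x => ∑ j ∈ XS, (∫ y, f y * (starRingEnd ℂ) (e j y) ∂μ) * e j x) 2 μ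
      ≤ ENNReal.ofReal ε' * eLpNorm f 2 μ) :
    (1 - ε - ε') ^ 2 ≤ ∫ x in E, ∑ j ∈ XS, ‖e j x‖ ^ 2 ∂μ := by
  classical
  set c : J → ℂ := fun j => ∫ y, f y * (starRingEnd ℂ) (e j y) ∂μ with hc
  set F : M → ℂ := fun x => ∑ j ∈ XS, c j * e j x with hFdef
  have hFmem : MemLp F 2 μ :=
    memLp_finset_sum XS (fun j _ => (he2 j).const_mul (c j))
  have hGmem : MemLp (E.indicator F) 2 μ := hFmem.indicator hE
  -- the L² norm of f, as a real number
  have hN_ne : eLpNorm f 2 μ ≠ 0 := by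
    simpa [eLpNorm_eq_zero_iff hf.aestronglyMeasurable two_ne_zero] using hf0
  set n : ℝ := (eLpNorm f 2 μ).toReal with hn
  have hn0 : 0 < n := ENNReal.toReal_pos hN_ne hf.2.ne
  set a : ℝ := (eLpNorm (E.indicator F) 2 μ).toReal with ha
  have ha0 : 0 ≤ a := ENNReal.toReal_nonneg
  -- Step A : triangle inequality
  have hfeq : f = (f - E.indicator f) + E.indicator (f - F) + E.indicator F := by
    funext x
    by_cases hx : x ∈ E <;>
      simp [Set.indicator_of_mem, Set.indicator_of_notMem, hx] <;> ring
  have htri : eLpNorm f 2 μ ≤ eLpNorm (f - E.indicator f) 2 μ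
      + eLpNorm (E.indicator (f - F)) 2 μ + eLpNorm (E.indicator F) 2 μ := by
    calc eLpNorm f 2 μ
        = eLpNorm ((f - E.indicator f) + E.indicator (f - F) + E.indicator F) 2 μ := by
          rw [← hfeq]
      _ ≤ eLpNorm ((f - E.indicator f) + E.indicator (f - F)) 2 μ
            + eLpNorm (E.indicator F) 2 μ := by
          exact eLpNorm_add_le
            ((hf.sub (hf.indicator hE)).aestronglyMeasurable.add
              ((hf.sub hFmem).indicator hE).aestronglyMeasurable)
            hGmem.aestronglyMeasurable one_le_two
      _ ≤ eLpNorm (f - E.indicator f) 2 μ + eLpNorm (E.indicator (f - F)) 2 μ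
            + eLpNorm (E.indicator F) 2 μ := by
          gcongr
          exact eLpNorm_add_le (hf.sub (hf.indicator hE)).aestronglyMeasurable
            ((hf.sub hFmem).indicator hE).aestronglyMeasurable one_le_two
  have hA : eLpNorm f 2 μ ≤ ENNReal.ofReal ε * eLpNorm f 2 μ
      + ENNReal.ofReal ε' * eLpNorm f 2 μ + eLpNorm (E.indicator F) 2 μ := by
    refine htri.trans ?_
    gcongr
    exact (eLpNorm_indicator_le _).trans hspec
  have hA' : n ≤ ε * n + ε' * n + a := by
    have hfin : ENNReal.ofReal ε * eLpNorm f 2 μ + ENNReal.ofReal ε' * eLpNorm f 2 μ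
        + eLpNorm (E.indicator F) 2 μ ≠ ⊤ := by
      refine ENNReal.add_ne_top.2 ⟨ENNReal.add_ne_top.2 ⟨?_, ?_⟩, hGmem.2.ne⟩ <;>
        exact ENNReal.mul_ne_top ENNReal.ofReal_ne_top hf.2.ne
    have := ENNReal.toReal_mono hfin hA
    rwa [ENNReal.toReal_add (ENNReal.add_ne_top.1 hfin).1 (ENNReal.add_ne_top.1 hfin).2,
      ENNReal.toReal_add (ENNReal.mul_ne_top ENNReal.ofReal_ne_top hf.2.ne)
        (ENNReal.mul_ne_top ENNReal.ofReal_ne_top hf.2.ne),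
      ENNReal.toReal_mul, ENNReal.toReal_mul, ENNReal.toReal_ofReal hε0,
      ENNReal.toReal_ofReal hε'0] at this
  have hAn : (1 - ε - ε') * n ≤ a := by nlinarith
  -- Step B : a² = ∫_E ‖F‖²
  have hIntSq : ∀ (g : M → ℂ), MemLp g 2 μ → Integrable (fun x => ‖g x‖ ^ 2) μ := by
    intro g hg
    have := hg.integrable_norm_rpow two_ne_zero ENNReal.ofNat_ne_top
    simpa [ENNReal.toReal_ofNat, Real.rpow_natCast] using this
  have ha2 : a ^ 2 = ∫ x, ‖E.indicator F x‖ ^ 2 ∂μ := by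
    have key := hGmem.eLpNorm_eq_integral_rpow_norm two_ne_zero ENNReal.ofNat_ne_top
    have hnn : 0 ≤ ∫ x, ‖E.indicator F x‖ ^ 2 ∂μ :=
      integral_nonneg fun x => by positivity
    have : a = (∫ x, ‖E.indicator F x‖ ^ 2 ∂μ) ^ ((2:ℝ)⁻¹) := by
      rw [ha, key, ENNReal.toReal_ofReal (by positivity)]
      norm_num [Real.rpow_natCast]
    rw [this, ← Real.rpow_natCast _ 2, ← Real.rpow_mul hnn]
    norm_num
  have haE : a ^ 2 = ∫ x in E, ‖F x‖ ^ 2 ∂μ := by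
    rw [ha2, ← integral_indicator hE]
    congr 1
    funext x
    by_cases hx : x ∈ E <;>
      simp [Set.indicator_of_mem, Set.indicator_of_notMem, hx]
  -- Bessel's inequality
  set B : ℝ := ∑ j ∈ XS, ‖c j‖ ^ 2 with hB
  have hB0 : 0 ≤ B := Finset.sum_nonneg fun j _ => by positivity
  have hbessel : B ≤ n ^ 2 := by
    set eL : J → Lp ℂ 2 μ := fun j => (he2 j).toLp (e j) with heL
    have horthL : Orthonormal ℂ eL := by
      rw [orthonormal_iff_ite]
      intro i j
      have h1 : (inner ℂ (eL i) (eL j) : ℂ) = ∫ x, (starRingEnd ℂ) (e i x) * e j x ∂μ := by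
        rw [MeasureTheory.L2.inner_def]
        apply integral_congr_ae
        filter_upwards [(he2 i).coeFn_toLp, (he2 j).coeFn_toLp] with x hi hj
        simp [heL, hi, hj, RCLike.inner_apply, mul_comm]
      rw [h1]
      have h2 : ∫ x, (starRingEnd ℂ) (e i x) * e j x ∂μ
          = (starRingEnd ℂ) (∫ x, e i x * (starRingEnd ℂ) (e j x) ∂μ) := by
        rw [← integral_conj]
        congr 1
        funext x
        simp [mul_comm]
      rw [h2, horth i j]
      split <;> simp
    have hb := horthL.sum_inner_products_le (s := XS) (hf.toLp f)
    have hip : ∀ j, (inner ℂ (eL j) (hf.toLp f) : ℂ) = c j := by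
      intro j
      rw [MeasureTheory.L2.inner_def]
      rw [show c j = ∫ x, (starRingEnd ℂ) (e j x) * f x ∂μ from by
        simp only [hc]; congr 1; funext x; ring]
      apply integral_congr_ae
      filter_upwards [(he2 j).coeFn_toLp, hf.coeFn_toLp] with x hj hx
      simp [heL, hj, hx, RCLike.inner_apply, mul_comm]
    have hnf : ‖hf.toLp f‖ = n := Lp.norm_toLp f hf
    calc B = ∑ j ∈ XS, ‖(inner ℂ (eL j) (hf.toLp f) : ℂ)‖ ^ 2 := by
          simp only [hip, hB]
      _ ≤ ‖hf.toLp f‖ ^ 2 := hb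
      _ = n ^ 2 := by rw [hnf]
  -- Cauchy-Schwarz pointwise
  set I : ℝ := ∫ x in E, ∑ j ∈ XS, ‖e j x‖ ^ 2 ∂μ with hI
  have hI0 : 0 ≤ I := integral_nonneg fun x => Finset.sum_nonneg fun j _ => by positivity
  have hCS : ∀ x, ‖F x‖ ^ 2 ≤ B * ∑ j ∈ XS, ‖e j x‖ ^ 2 := by
    intro x
    calc ‖F x‖ ^ 2 ≤ (∑ j ∈ XS, ‖c j‖ * ‖e j x‖) ^ 2 := by
          apply pow_le_pow_left₀ (norm_nonneg _)
          refine (norm_sum_le _ _).trans ?_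
          apply le_of_eq
          exact Finset.sum_congr rfl fun j _ => norm_mul _ _
      _ ≤ B * ∑ j ∈ XS, ‖e j x‖ ^ 2 :=
          Finset.sum_mul_sq_le_sq_mul_sq XS _ _
  have hsumInt : Integrable (fun x => ∑ j ∈ XS, ‖e j x‖ ^ 2) (μ.restrict E) := by
    apply integrable_finset_sum
    intro j _
    exact (hIntSq (e j) (he2 j)).restrict
  have haBI : a ^ 2 ≤ B * I := by
    rw [haE, hI, ← integral_const_mul]
    apply integral_mono ((hIntSq F hFmem).restrict) (hsumInt.const_mul B)
    intro x
    exact hCS x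
  -- conclude
  have hctr : ((1 - ε - ε') * n) ^ 2 ≤ n ^ 2 * I := by
    calc ((1 - ε - ε') * n) ^ 2 ≤ a ^ 2 := by
          apply pow_le_pow_left₀ (by nlinarith) hAn
      _ ≤ B * I := haBI
      _ ≤ n ^ 2 * I := mul_le_mul_of_nonneg_right hbessel hI0
  have hn2 : 0 < n ^ 2 := by positivity
  rw [mul_pow] at hctr
  nlinarith [hctr, hn2]
end

section
/- Let $(M, \mu)$ be a measure space with $0 < \mu(M) < \infty$, let $(e_j)_{j \in J}$ be an orthonormal family in $L^2(M, \mu)$ with an associated eigenvalue map $\lambda : J \to \mathbb{R}$ such that each level set $\{j : \lambda_j = s\}$ is finite, and suppose that for every value $s$ in the range of $\lambda$, the function $x \mapsto \sum_{j : \lambda_j = s} |e_j(x)|^2$ is constant $\mu$-almost everywhere. Let $S$ be a finite subset of the range of $\lambda$, let $X_S = \{j : \lambda_j \in S\}$, and let $E \subset M$ be measurable. Suppose $f \in L^2(M,\mu)$ is not almost everywhere zero, satisfies $\|f - 1_E f\|_{L^2} \leq \epsilon \|f\|_{L^2}$ and $\|f - \sum_{j \in X_S} \langle f, e_j\rangle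 e_j\|_{L^2} \leq \epsilon' \|f\|_{L^2}$, with $0 \leq \epsilon, \epsilon' < 1$ and $\epsilon + \epsilon' < 1$. Then $(1 - \epsilon - \epsilon')^2 \leq \frac{\mu(E)}{\mu(M)} \cdot \# X_S$. -/
open MeasureTheory ENNReal

private lemma sq_toReal_eLpNorm {M : Type*} [MeasurableSpace M] {μ : Measure M}
    {u : M → ℂ} (hu : MemLp u 2 μ) :
    (eLpNorm u 2 μ).toReal ^ 2 = ∫ x, ‖u x‖ ^ 2 ∂μ := by
  have h2 : (2:ℝ≥0∞).toReal = (2:ℝ) := by simp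
  have hI : (0:ℝ) ≤ ∫ a, ‖u a‖ ^ (2:ℝ≥0∞).toReal ∂μ :=
    integral_nonneg fun a => Real.rpow_nonneg (norm_nonneg _) _
  rw [hu.eLpNorm_eq_integral_rpow_norm two_ne_zero ENNReal.ofNat_ne_top,
    ENNReal.toReal_ofReal (Real.rpow_nonneg hI _)]
  rw [← Real.rpow_natCast (_ ^ _) 2, ← Real.rpow_mul hI]
  norm_num [h2]

private lemma integrable_normsq {M : Type*} [MeasurableSpace M] {μ : Measure M}
    {u : M → ℂ} (hu : MemLp u 2 μ) :
    Integrable (fun x => ‖u x‖ ^ 2) μ := by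
  have := hu.integrable_norm_rpow two_ne_zero ENNReal.ofNat_ne_top
  refine this.congr (Filter.Eventually.of_forall fun x => ?_)
  simp only []
  rw [show (2:ℝ≥0∞).toReal = ((2:ℕ):ℝ) by simp, Real.rpow_natCast]

/-- Uncertainty principle on "homogeneous" systems: let `(e_j)` be an orthonormal family
with eigenvalue map `λ : J → ℝ` whose level sets `T s = {j : λ_j = s}` are finite, such
that `∑_{λ_j = s} |e_j(x)|²` is a.e. constant for every `s` in the range of `λ`. If a
nonzero `f ∈ L²` is `L²`-concentrated on `E` at level `(1-ε²)^{-1/2}` and spectrally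
concentrated on `X_S = {j : λ_j ∈ S}` at level `(1-ε'²)^{-1/2}`, then
`(1-ε-ε')² ≤ (μ(E)/μ(M)) ⬝ #X_S`. -/
theorem statement8 {M J : Type*} [MeasurableSpace M] [DecidableEq J] (μ : Measure M)
    (hM0 : 0 < μ Set.univ) (hMfin : μ Set.univ < ⊤)
    (e : J → M → ℂ) (lam : J → ℝ)
    (he2 : ∀ j, MemLp (e j) 2 μ)
    (horth : ∀ i j, ∫ x, e i x * (starRingEnd ℂ) (e j x) ∂μ = if i = j then 1 else 0)
    (T : ℝ → Finset J) (hT : ∀ s j, j ∈ T s ↔ lam j = s)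
    (hhom : ∀ s ∈ Set.range lam, ∃ c : ℝ, ∀ᵐ x ∂μ, ∑ j ∈ T s, ‖e j x‖ ^ 2 = c)
    (S : Finset ℝ) (hS : ↑S ⊆ Set.range lam)
    (XS : Finset J) (hXS : ∀ j, j ∈ XS ↔ lam j ∈ S)
    (E : Set M) (hE : MeasurableSet E)
    (f : M → ℂ) (hf : MemLp f 2 μ) (hf0 : ¬ (f =ᵐ[μ] 0))
    (ε ε' : ℝ) (hε0 : 0 ≤ ε) (hε1 : ε < 1) (hε'0 : 0 ≤ ε') (hε'1 : ε' < 1)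
    (hsum : ε + ε' < 1)
    (hconc : eLpNorm (f - E.indicator f) 2 μ ≤ ENNReal.ofReal ε * eLpNorm f 2 μ)
    (hspec : eLpNorm
        (f - fun x => ∑ j ∈ XS, (∫ y, f y * (starRingEnd ℂ) (e j y) ∂μ) * e j x) 2 μ
      ≤ ENNReal.ofReal ε' * eLpNorm f 2 μ) :
    (1 - ε - ε') ^ 2 ≤ (μ E).toReal / (μ Set.univ).toReal * XS.card := by
  classical
  have hμfin : IsFiniteMeasure μ := ⟨hMfin⟩
  set c : J → ℂ := fun j => ∫ y, f y * (starRingEnd ℂ) (e j y) ∂μ with hc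
  set g : M → ℂ := fun x => ∑ j ∈ XS, c j * e j x with hgdef
  have hg2 : MemLp g 2 μ :=
    memLp_finset_sum XS (fun j _ => (he2 j).const_mul (c j))
  have hμM : (0:ℝ) < (μ Set.univ).toReal := ENNReal.toReal_pos hM0.ne' hMfin.ne
  -- N basics
  set N : ℝ≥0∞ := eLpNorm f 2 μ with hN
  have hNne : N ≠ 0 := by
    rw [hN, Ne, eLpNorm_eq_zero_iff hf.aestronglyMeasurable two_ne_zero]
    exact hf0
  have hNfin : N ≠ ⊤ := hf.2.ne
  have hNr : (0:ℝ) < N.toReal := ENNReal.toReal_pos hNne hNfin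
  -- Step A : concentration of indicator g
  have hfg : eLpNorm (f - g) 2 μ ≤ ENNReal.ofReal ε' * N := hspec
  have hdecomp : f = (f - E.indicator f) + (E.indicator (f - g) + E.indicator g) := by
    funext x
    by_cases hx : x ∈ E <;>
      simp [Set.indicator_of_mem, Set.indicator_of_notMem, hx, Pi.sub_apply]
  have hA : ENNReal.ofReal (1 - ε - ε') * N ≤ eLpNorm (E.indicator g) 2 μ := by
    have m1 : AEStronglyMeasurable (f - E.indicator f) μ :=
      hf.aestronglyMeasurable.sub (hf.aestronglyMeasurable.indicator hE)
    have m2 : AEStronglyMeasurable (E.indicator (f - g)) μ :=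
      ((hf.sub hg2).aestronglyMeasurable).indicator hE
    have m3 : AEStronglyMeasurable (E.indicator g) μ :=
      hg2.aestronglyMeasurable.indicator hE
    have h1 : N ≤ eLpNorm (f - E.indicator f) 2 μ
        + (eLpNorm (E.indicator (f - g)) 2 μ + eLpNorm (E.indicator g) 2 μ) := by
      calc N = eLpNorm ((f - E.indicator f) + (E.indicator (f - g) + E.indicator g)) 2 μ := by
              rw [hN, ← hdecomp]
        _ ≤ _ := le_trans (eLpNorm_add_le m1 (m2.add m3) one_le_two)
            (by gcongr; exact eLpNorm_add_le m2 m3 one_le_two)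
    have h2 : eLpNorm (E.indicator (f - g)) 2 μ ≤ ENNReal.ofReal ε' * N :=
      le_trans (eLpNorm_indicator_le _) hfg
    have h3 : N ≤ ENNReal.ofReal (ε + ε') * N + eLpNorm (E.indicator g) 2 μ := by
      calc N ≤ _ := h1
        _ ≤ ENNReal.ofReal ε * N + (ENNReal.ofReal ε' * N + eLpNorm (E.indicator g) 2 μ) := by
              gcongr
        _ = ENNReal.ofReal (ε + ε') * N + eLpNorm (E.indicator g) 2 μ := by
              rw [ENNReal.ofReal_add hε0 hε'0, add_mul]; ring
    have hkey : ENNReal.ofReal (1 - ε - ε') * N + ENNReal.ofReal (ε + ε') * N = N := by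
      rw [← add_mul, ← ENNReal.ofReal_add (by linarith) (by linarith)]
      norm_num
    have hfin : ENNReal.ofReal (ε + ε') * N ≠ ⊤ := ENNReal.mul_ne_top ofReal_ne_top hNfin
    rw [← ENNReal.add_le_add_iff_right hfin]
    calc ENNReal.ofReal (1 - ε - ε') * N + ENNReal.ofReal (ε + ε') * N = N := hkey
      _ ≤ ENNReal.ofReal (ε + ε') * N + eLpNorm (E.indicator g) 2 μ := h3
      _ = eLpNorm (E.indicator g) 2 μ + ENNReal.ofReal (ε + ε') * N := add_comm _ _
  -- real version
  have hAr : (1 - ε - ε') * N.toReal ≤ (eLpNorm (E.indicator g) 2 μ).toReal := by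
    have hfin' : eLpNorm (E.indicator g) 2 μ ≠ ⊤ := (hg2.indicator hE).2.ne
    have := ENNReal.toReal_mono hfin' hA
    rwa [ENNReal.toReal_mul, ENNReal.toReal_ofReal (by linarith)] at this
  -- Bessel : B ≤ N.toReal ^ 2
  set B : ℝ := ∑ j ∈ XS, ‖c j‖ ^ 2 with hB
  have hBessel : B ≤ N.toReal ^ 2 := by
    set F : Lp ℂ 2 μ := hf.toLp f with hF
    set Ej : J → Lp ℂ 2 μ := fun j => (he2 j).toLp (e j) with hEj
    have horth' : Orthonormal ℂ Ej := by
      rw [orthonormal_iff_ite]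
      intro i j
      have hint : (inner ℂ (Ej i) (Ej j) : ℂ)
          = ∫ x, (starRingEnd ℂ) (e i x) * e j x ∂μ := by
        rw [L2.inner_def]
        refine integral_congr_ae ?_
        filter_upwards [(he2 i).coeFn_toLp, (he2 j).coeFn_toLp] with x hi hj
        simp [hEj, hi, hj, RCLike.inner_apply]
        ring
      rw [hint]
      have := horth j i
      rw [show (∫ x, (starRingEnd ℂ) (e i x) * e j x ∂μ)
          = ∫ x, e j x * (starRingEnd ℂ) (e i x) ∂μ by congr 1; ext x; ring, this]
      simp [eq_comm]
    have hinner : ∀ j, (inner ℂ (Ej j) F : ℂ) = c j := by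
      intro j
      rw [L2.inner_def]
      rw [hc]
      refine integral_congr_ae ?_
      filter_upwards [(he2 j).coeFn_toLp, hf.coeFn_toLp] with x hj hx
      simp [hEj, hF, hj, hx, RCLike.inner_apply]
    have hb := horth'.sum_inner_products_le (s := XS) F
    rw [Lp.norm_toLp] at hb
    calc B = ∑ j ∈ XS, ‖(inner ℂ (Ej j) F : ℂ)‖ ^ 2 := by
            refine Finset.sum_congr rfl fun j _ => by rw [hinner]
      _ ≤ _ := hb
  have hB0 : 0 ≤ B := Finset.sum_nonneg fun j _ => by positivity
  -- the a.e. constant for XS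
  have hXSbi : XS = S.biUnion T := by
    ext j
    simp only [Finset.mem_biUnion, hXS, hT]
    constructor
    · intro h; exact ⟨lam j, h, rfl⟩
    · rintro ⟨s, hs, rfl⟩; exact hs
  have hTdisj : ∀ s ∈ S, ∀ t ∈ S, s ≠ t → Disjoint (T s) (T t) := by
    intro s _ t _ hst
    refine Finset.disjoint_left.mpr fun j hjs hjt => ?_
    exact hst (((hT s j).mp hjs).symm.trans ((hT t j).mp hjt))
  have hint_e : ∀ j, ∫ x, ‖e j x‖ ^ 2 ∂μ = 1 := by
    intro j
    have h1 := horth j j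
    simp only [if_pos rfl] at h1
    have h2 : (∫ x, e j x * (starRingEnd ℂ) (e j x) ∂μ)
        = ∫ x, ((‖e j x‖ ^ 2 : ℝ) : ℂ) ∂μ := by
      congr 1; ext x
      rw [Complex.mul_conj']
      norm_cast
    rw [h2] at h1
    have h3 : ((∫ x, ‖e j x‖ ^ 2 ∂μ : ℝ) : ℂ) = 1 :=
      (integral_ofReal (𝕜 := ℂ)).symm.trans h1
    exact_mod_cast h3
  -- a.e. value of the sum over each T s
  have hcs : ∀ s ∈ S, ∀ᵐ x ∂μ, ∑ j ∈ T s, ‖e j x‖ ^ 2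
      = (T s).card / (μ Set.univ).toReal := by
    intro s hs
    obtain ⟨cs, hcs⟩ := hhom s (hS hs)
    have hint : ∫ x, ∑ j ∈ T s, ‖e j x‖ ^ 2 ∂μ = (T s).card := by
      rw [integral_finset_sum _ (fun j _ => integrable_normsq (he2 j))]
      simp only [hint_e, Finset.sum_const, nsmul_eq_mul, mul_one]
    have hint2 : ∫ x, ∑ j ∈ T s, ‖e j x‖ ^ 2 ∂μ = cs * (μ Set.univ).toReal := by
      rw [integral_congr_ae hcs, integral_const, smul_eq_mul, mul_comm]
      rfl
    have hcsval : cs = (T s).card / (μ Set.univ).toReal := by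
      field_simp
      rw [← hint2, hint]
    filter_upwards [hcs] with x hx
    rw [hx, hcsval]
  have hae : ∀ᵐ x ∂μ, ∑ j ∈ XS, ‖e j x‖ ^ 2
      = (XS.card : ℝ) / (μ Set.univ).toReal := by
    have hall : ∀ᵐ x ∂μ, ∀ s ∈ S, ∑ j ∈ T s, ‖e j x‖ ^ 2
        = (T s).card / (μ Set.univ).toReal := by
      rw [Filter.eventually_all_finset]
      exact hcs
    filter_upwards [hall] with x hx
    rw [hXSbi, Finset.sum_biUnion hTdisj,
      Finset.sum_congr rfl (fun s hs => hx s hs), ← Finset.sum_div]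
    congr 1
    rw [Finset.card_biUnion hTdisj]
    push_cast
    rfl
  -- pointwise Cauchy-Schwarz
  set CC : ℝ := (XS.card : ℝ) / (μ Set.univ).toReal with hCC
  have hgbound : ∀ᵐ x ∂μ,
      ‖E.indicator g x‖ ^ 2 ≤ E.indicator (fun _ => B * CC) x := by
    filter_upwards [hae] with x hx
    by_cases hxE : x ∈ E
    · rw [Set.indicator_of_mem hxE, Set.indicator_of_mem hxE]
      have h1 : ‖g x‖ ≤ ∑ j ∈ XS, ‖c j‖ * ‖e j x‖ := by
        refine le_trans (norm_sum_le _ _) ?_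
        refine le_of_eq (Finset.sum_congr rfl fun j _ => ?_)
        rw [norm_mul]
      calc ‖g x‖ ^ 2 ≤ (∑ j ∈ XS, ‖c j‖ * ‖e j x‖) ^ 2 :=
            pow_le_pow_left₀ (norm_nonneg _) h1 2
        _ ≤ (∑ j ∈ XS, ‖c j‖ ^ 2) * ∑ j ∈ XS, ‖e j x‖ ^ 2 :=
            Finset.sum_mul_sq_le_sq_mul_sq XS _ _
        _ = B * CC := by rw [hx]
    · rw [Set.indicator_of_notMem hxE, Set.indicator_of_notMem hxE]
      simp
  have hCint : ∫ x, ‖E.indicator g x‖ ^ 2 ∂μ ≤ B * CC * (μ E).toReal := by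
    have h1 := integral_mono_ae (integrable_normsq (hg2.indicator hE))
      ((integrable_const (B * CC)).indicator hE) hgbound
    rw [integral_indicator_const (B * CC) hE, smul_eq_mul] at h1
    change _ ≤ (μ E).toReal * (B * CC) at h1
    linarith [h1]
  have hCC0 : 0 ≤ CC := div_nonneg (Nat.cast_nonneg _) ENNReal.toReal_nonneg
  have hfinal : (1 - ε - ε') ^ 2 * N.toReal ^ 2
      ≤ N.toReal ^ 2 * ((μ E).toReal / (μ Set.univ).toReal * XS.card) := by
    have h1mε : 0 ≤ 1 - ε - ε' := by linarith
    calc (1 - ε - ε') ^ 2 * N.toReal ^ 2 = ((1 - ε - ε') * N.toReal) ^ 2 := by ring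
      _ ≤ (eLpNorm (E.indicator g) 2 μ).toReal ^ 2 :=
          pow_le_pow_left₀ (by positivity) hAr 2
      _ = ∫ x, ‖E.indicator g x‖ ^ 2 ∂μ := sq_toReal_eLpNorm (hg2.indicator hE)
      _ ≤ B * CC * (μ E).toReal := hCint
      _ ≤ N.toReal ^ 2 * CC * (μ E).toReal :=
          mul_le_mul_of_nonneg_right (mul_le_mul_of_nonneg_right hBessel hCC0) ENNReal.toReal_nonneg
      _ = N.toReal ^ 2 * ((μ E).toReal / (μ Set.univ).toReal * XS.card) := by
          rw [hCC]; ring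
  have hsq : 0 < N.toReal ^ 2 := by positivity
  have h2 : N.toReal ^ 2 * ((1 - ε - ε') ^ 2)
      ≤ N.toReal ^ 2 * ((μ E).toReal / (μ Set.univ).toReal * XS.card) := by
    calc N.toReal ^ 2 * (1 - ε - ε') ^ 2
        = (1 - ε - ε') ^ 2 * N.toReal ^ 2 := by ring
      _ ≤ _ := hfinal
  exact le_of_mul_le_mul_left h2 hsq
end

section
/- Let $(M, \mu)$ be a measure space, let $(e_j)_{j \in J}$ be an orthonormal family in $L^2(M, \mu)$, let $X_S \subset J$ be a finite subset, and let $E \subset M$ be a measurable set of finite measure. Suppose there is $B \geq 0$ such that $\sum_{j \in X_S} |e_j(x)|^2 \leq B$ for $\mu$-almost every $x \in M$. Suppose $f \in L^2(M,\mu)$ is not almost everywhere zero and satisfies $\|f - 1_E f\|_{L^2} \leq \epsilon \|f\|_{L^2}$ and $\|f - \sum_{j \in X_S} \langle f, e_j\rangle e_j\|_{L^2} \leq \epsilon' \|f\|_{L^2}$, with $0 \leq \epsilon, \epsilon' < 1$ and $\epsilon + \epsilon' < 1$. Then $(1 - \epsilon - \epsilon')^2 \leq \mu(E) \cdot B$.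 -/
open MeasureTheory
open scoped ComplexInnerProductSpace

/-- Size-dependent uncertainty principle: if `∑_{j ∈ X_S} |e_j(x)|² ≤ B` a.e. and a
nonzero `f ∈ L²` is `L²`-concentrated on `E` and spectrally concentrated on the finite
set `X_S`, then `(1-ε-ε')² ≤ μ(E) ⬝ B`. -/
theorem statement9 {M J : Type*} [MeasurableSpace M] [DecidableEq J] (μ : Measure M)
    (e : J → M → ℂ) (he2 : ∀ j, MemLp (e j) 2 μ)
    (horth : ∀ i j, ∫ x, e i x * (starRingEnd ℂ) (e j x) ∂μ = if i = j then 1 else 0)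
    (XS : Finset J) (E : Set M) (hE : MeasurableSet E) (hEfin : μ E < ⊤)
    (B : ℝ) (hB : 0 ≤ B)
    (hbound : ∀ᵐ x ∂μ, ∑ j ∈ XS, ‖e j x‖ ^ 2 ≤ B)
    (f : M → ℂ) (hf : MemLp f 2 μ) (hf0 : ¬ (f =ᵐ[μ] 0))
    (ε ε' : ℝ) (hε0 : 0 ≤ ε) (hε1 : ε < 1) (hε'0 : 0 ≤ ε') (hε'1 : ε' < 1)
    (hsum : ε + ε' < 1)
    (hconc : eLpNorm (f - E.indicator f) 2 μ ≤ ENNReal.ofReal ε * eLpNorm f 2 μ)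
    (hspec : eLpNorm
        (f - fun x => ∑ j ∈ XS, (∫ y, f y * (starRingEnd ℂ) (e j y) ∂μ) * e j x) 2 μ
      ≤ ENNReal.ofReal ε' * eLpNorm f 2 μ) :
    (1 - ε - ε') ^ 2 ≤ (μ E).toReal * B := by
  classical
  set d : J → ℂ := fun j => ∫ y, f y * (starRingEnd ℂ) (e j y) ∂μ with hd
  set S : M → ℂ := fun x => ∑ j ∈ XS, d j * e j x with hSdef
  have hSmem : MemLp S 2 μ := memLp_finset_sum XS (fun j _ => (he2 j).const_mul (d j))
  -- Lp space setup
  set F : Lp ℂ 2 μ := hf.toLp f with hFdef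
  set Ej : J → Lp ℂ 2 μ := fun j => (he2 j).toLp (e j) with hEjdef
  have horthLp : Orthonormal ℂ Ej := by
    rw [orthonormal_iff_ite]
    intro i j
    have h1 : ⟪Ej i, Ej j⟫ = ∫ x, (starRingEnd ℂ) (e i x) * e j x ∂μ := by
      rw [MeasureTheory.L2.inner_def]
      refine integral_congr_ae ?_
      filter_upwards [(he2 i).coeFn_toLp, (he2 j).coeFn_toLp] with x hx hy
      rw [hx, hy, RCLike.inner_apply, mul_comm]
    have h2 : ∫ x, (starRingEnd ℂ) (e i x) * e j x ∂μ
        = (starRingEnd ℂ) (∫ x, e i x * (starRingEnd ℂ) (e j x) ∂μ) := by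
      rw [← integral_conj]
      refine integral_congr_ae (Filter.Eventually.of_forall fun x => ?_)
      simp [mul_comm]
    rw [h1, h2, horth i j]
    split <;> simp
  have hcoef : ∀ j, ⟪Ej j, F⟫ = d j := by
    intro j
    rw [MeasureTheory.L2.inner_def, hd]
    refine integral_congr_ae ?_
    filter_upwards [(he2 j).coeFn_toLp, hf.coeFn_toLp] with x hx hy
    rw [hx, hy, RCLike.inner_apply, mul_comm]
  set n : ℝ := ‖F‖ with hn
  have hn0 : 0 < n := by
    rw [hn, norm_pos_iff]
    intro h
    apply hf0
    have h1 : f =ᵐ[μ] ⇑(hf.toLp f) := hf.coeFn_toLp.symm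
    rw [hFdef] at h
    rw [h] at h1
    exact h1.trans (Lp.coeFn_zero ℂ 2 μ)
  have hBessel : ∑ j ∈ XS, ‖d j‖ ^ 2 ≤ n ^ 2 := by
    have := horthLp.sum_inner_products_le F (s := XS)
    simpa [hcoef] using this
  -- pointwise bound for the indicator of S
  have hpt : ∀ᵐ x ∂μ, ‖E.indicator S x‖
      ≤ ‖E.indicator (fun _ => (n * Real.sqrt B : ℝ)) x‖ := by
    filter_upwards [hbound] with x hx
    by_cases hxE : x ∈ E
    · rw [Set.indicator_of_mem hxE, Set.indicator_of_mem hxE]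
      have hSx : ‖S x‖ ≤ ∑ j ∈ XS, ‖d j‖ * ‖e j x‖ := by
        refine (norm_sum_le _ _).trans ?_
        exact Finset.sum_le_sum fun j _ => (norm_mul _ _).le
      have hCS : (∑ j ∈ XS, ‖d j‖ * ‖e j x‖) ^ 2
          ≤ (∑ j ∈ XS, ‖d j‖ ^ 2) * ∑ j ∈ XS, ‖e j x‖ ^ 2 :=
        Finset.sum_mul_sq_le_sq_mul_sq XS _ _
      have hsumnn : 0 ≤ ∑ j ∈ XS, ‖d j‖ * ‖e j x‖ :=
        Finset.sum_nonneg fun j _ => mul_nonneg (norm_nonneg _) (norm_nonneg _)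
      have hub : (∑ j ∈ XS, ‖d j‖ * ‖e j x‖) ^ 2 ≤ n ^ 2 * B := by
        refine hCS.trans ?_
        have h1 : 0 ≤ ∑ j ∈ XS, ‖e j x‖ ^ 2 :=
          Finset.sum_nonneg fun j _ => sq_nonneg _
        have h2 : 0 ≤ ∑ j ∈ XS, ‖d j‖ ^ 2 :=
          Finset.sum_nonneg fun j _ => sq_nonneg _
        exact mul_le_mul hBessel hx h1 (sq_nonneg n)
      have : ∑ j ∈ XS, ‖d j‖ * ‖e j x‖ ≤ n * Real.sqrt B := by
        have := Real.sqrt_le_sqrt hub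
        rwa [Real.sqrt_sq hsumnn, Real.sqrt_mul (sq_nonneg n), Real.sqrt_sq hn0.le] at this
      have hnB : 0 ≤ n * Real.sqrt B := mul_nonneg hn0.le (Real.sqrt_nonneg _)
      rw [Real.norm_of_nonneg hnB]
      exact hSx.trans this
    · simp [Set.indicator_of_notMem hxE]
  have hA : eLpNorm (E.indicator S) 2 μ
      ≤ ENNReal.ofReal (n * Real.sqrt B) * μ E ^ (1 / (2:ℝ)) := by
    refine (eLpNorm_mono_ae hpt).trans ?_
    rw [eLpNorm_indicator_const hE (by norm_num) (by norm_num)]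
    have hval : (‖(n * Real.sqrt B : ℝ)‖ₑ : ENNReal) = ENNReal.ofReal (n * Real.sqrt B) := by
      rw [← ofReal_norm_eq_enorm,
        Real.norm_of_nonneg (mul_nonneg hn0.le (Real.sqrt_nonneg _))]
    rw [hval]
    norm_num
  -- triangle inequality
  have hmf : AEStronglyMeasurable f μ := hf.aestronglyMeasurable
  have hmS : AEStronglyMeasurable S μ := hSmem.aestronglyMeasurable
  have hm1 : AEStronglyMeasurable (f - E.indicator f) μ :=
    hmf.sub (hmf.indicator hE)
  have hm2 : AEStronglyMeasurable (E.indicator f - E.indicator S) μ :=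
    (hmf.indicator hE).sub (hmS.indicator hE)
  have hm3 : AEStronglyMeasurable (E.indicator S) μ := hmS.indicator hE
  have hfeq : f = (f - E.indicator f) + ((E.indicator f - E.indicator S) + E.indicator S) := by
    funext x; simp
  have htri : eLpNorm f 2 μ ≤ eLpNorm (f - E.indicator f) 2 μ
      + (eLpNorm (E.indicator f - E.indicator S) 2 μ + eLpNorm (E.indicator S) 2 μ) := by
    calc eLpNorm f 2 μ
        = eLpNorm ((f - E.indicator f) + ((E.indicator f - E.indicator S) + E.indicator S)) 2 μ := by
          rw [← hfeq]
      _ ≤ eLpNorm (f - E.indicator f) 2 μ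
          + eLpNorm ((E.indicator f - E.indicator S) + E.indicator S) 2 μ :=
          eLpNorm_add_le hm1 (hm2.add hm3) (by norm_num)
      _ ≤ _ := by
          gcongr
          exact eLpNorm_add_le hm2 hm3 (by norm_num)
  have hmid : eLpNorm (E.indicator f - E.indicator S) 2 μ ≤ ENNReal.ofReal ε' * eLpNorm f 2 μ := by
    have : E.indicator f - E.indicator S = E.indicator (f - S) := by
      funext x
      by_cases hxE : x ∈ E <;> simp [Set.indicator_of_mem, Set.indicator_of_notMem, hxE]
    rw [this]
    exact (eLpNorm_indicator_le _).trans hspec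
  have hmain : eLpNorm f 2 μ ≤ ENNReal.ofReal ε * eLpNorm f 2 μ
      + (ENNReal.ofReal ε' * eLpNorm f 2 μ
        + ENNReal.ofReal (n * Real.sqrt B) * μ E ^ (1 / (2:ℝ))) := by
    exact htri.trans (add_le_add hconc (add_le_add hmid hA))
  -- pass to real numbers
  have hNne : eLpNorm f 2 μ ≠ ⊤ := hf.2.ne
  have hNr : (eLpNorm f 2 μ).toReal = n := (Lp.norm_toLp f hf).symm
  have hμr : (μ E ^ (1 / (2:ℝ))).toReal = Real.sqrt ((μ E).toReal) := by
    rw [← ENNReal.toReal_rpow, Real.sqrt_eq_rpow]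
  have hT1 : ENNReal.ofReal ε * eLpNorm f 2 μ ≠ ⊤ :=
    ENNReal.mul_ne_top ENNReal.ofReal_ne_top hNne
  have hT2 : ENNReal.ofReal ε' * eLpNorm f 2 μ ≠ ⊤ :=
    ENNReal.mul_ne_top ENNReal.ofReal_ne_top hNne
  have hT3 : ENNReal.ofReal (n * Real.sqrt B) * μ E ^ (1 / (2:ℝ)) ≠ ⊤ :=
    ENNReal.mul_ne_top ENNReal.ofReal_ne_top
      (ENNReal.rpow_ne_top_of_nonneg (by norm_num) hEfin.ne)
  have hreal : n ≤ ε * n + (ε' * n + (n * Real.sqrt B) * Real.sqrt ((μ E).toReal)) := by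
    have h1 := ENNReal.toReal_mono
      (ENNReal.add_ne_top.2 ⟨hT1, ENNReal.add_ne_top.2 ⟨hT2, hT3⟩⟩) hmain
    rw [ENNReal.toReal_add hT1 (ENNReal.add_ne_top.2 ⟨hT2, hT3⟩), ENNReal.toReal_add hT2 hT3,
      ENNReal.toReal_mul, ENNReal.toReal_mul, ENNReal.toReal_mul,
      ENNReal.toReal_ofReal hε0, ENNReal.toReal_ofReal hε'0,
      ENNReal.toReal_ofReal (mul_nonneg hn0.le (Real.sqrt_nonneg _)), hNr, hμr] at h1
    exact h1
  -- final arithmetic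
  have hdiv : 1 - ε - ε' ≤ Real.sqrt B * Real.sqrt ((μ E).toReal) := by
    have h := hreal
    nlinarith [hn0, Real.sqrt_nonneg B, Real.sqrt_nonneg ((μ E).toReal)]
  have hsB := Real.sq_sqrt hB
  have hsμ := Real.sq_sqrt (ENNReal.toReal_nonneg : (0:ℝ) ≤ (μ E).toReal)
  nlinarith [Real.sqrt_nonneg B, Real.sqrt_nonneg ((μ E).toReal),
    sq_nonneg (Real.sqrt B * Real.sqrt ((μ E).toReal))]
end

section
/- Let $(M, \mu)$ be a measure space, let $(e_j)_{j \in J}$ be an orthonormal family in $L^2(M, \mu)$ with an eigenvalue map $\lambda : J \to [0,\infty)$, and let $d \geq 1$, $C_M > 0$. Suppose that for every $\eta \geq 0$, $\sum_{j : \lambda_j \in [\eta, \eta+1]} |e_j(x)|^2 \leq C_M \eta^{d-1}$ for $\mu$-almost every $x$ (in particular each such sum is over a finite set). Let $\mu_1, \ldots, \mu_n \geq 1$, let $S \subset \bigcup_{k=1}^n [\mu_k, \mu_k + 1]$ be a finite set, let $X_S = \{j : \lambda_j \in S\}$, and let $E \subset M$ be a measurable set of finite measure. Suppose $f \in L^2(M,\mu)$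 is not almost everywhere zero and satisfies $\|f - 1_E f\|_{L^2} \leq \epsilon \|f\|_{L^2}$ and $\|f - \sum_{j \in X_S} \langle f, e_j\rangle e_j\|_{L^2} \leq \epsilon' \|f\|_{L^2}$, with $0 \leq \epsilon, \epsilon' < 1$ and $\epsilon + \epsilon' < 1$. Then $(1 - \epsilon - \epsilon')^2 \leq \mu(E) \cdot C_M \sum_{k=1}^n \mu_k^{d-1}$. -/
open MeasureTheory

lemma sum_biUnion_le_aux {ι κ : Type*} [DecidableEq κ] (s : Finset ι) (t : ι → Finset κ)
    (f : κ → ℝ) (hf : ∀ j, 0 ≤ f j) :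
    ∑ j ∈ s.biUnion t, f j ≤ ∑ i ∈ s, ∑ j ∈ t i, f j := by
  classical
  induction s using Finset.induction_on with
  | empty => simp
  | @insert a s h ih =>
    rw [Finset.biUnion_insert, Finset.sum_insert h]
    have h2 := Finset.sum_union_inter (s₁ := t a) (s₂ := s.biUnion t) (f := f)
    have h3 : 0 ≤ ∑ j ∈ t a ∩ s.biUnion t, f j := Finset.sum_nonneg fun j _ => hf j
    linarith

/-- Covering uncertainty principle: if the spectral clusters satisfy the sup-norm bound
`∑_{λ_j ∈ [η, η+1]} |e_j(x)|² ≤ C_M η^{d-1}` a.e. for all `η ≥ 0`, the finite frequency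
set `S` is covered by the unit intervals `[μ_k, μ_k + 1]`, `1 ≤ k ≤ n`, and a nonzero
`f ∈ L²` is `L²`-concentrated on `E` and spectrally concentrated on `X_S = {j : λ_j ∈ S}`,
then `(1-ε-ε')² ≤ μ(E) ⬝ C_M ∑_k μ_k^{d-1}`. -/
theorem statement10 {M J : Type*} [MeasurableSpace M] [DecidableEq J] (μ : Measure M)
    (e : J → M → ℂ) (lam : J → ℝ) (hlam : ∀ j, 0 ≤ lam j)
    (he2 : ∀ j, MemLp (e j) 2 μ)
    (horth : ∀ i j, ∫ x, e i x * (starRingEnd ℂ) (e j x) ∂μ = if i = j then 1 else 0)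
    (d : ℕ) (hd : 1 ≤ d) (CM : ℝ) (hCM : 0 < CM)
    (clus : ℝ → Finset J) (hclus : ∀ η j, j ∈ clus η ↔ lam j ∈ Set.Icc η (η + 1))
    (hcluster : ∀ η : ℝ, 0 ≤ η →
      ∀ᵐ x ∂μ, ∑ j ∈ clus η, ‖e j x‖ ^ 2 ≤ CM * η ^ (d - 1))
    (n : ℕ) (μs : Fin n → ℝ) (hμs : ∀ k, 1 ≤ μs k)
    (S : Finset ℝ) (hS : ↑S ⊆ ⋃ k, Set.Icc (μs k) (μs k + 1))
    (XS : Finset J) (hXS : ∀ j, j ∈ XS ↔ lam j ∈ S)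
    (E : Set M) (hE : MeasurableSet E) (hEfin : μ E < ⊤)
    (f : M → ℂ) (hf : MemLp f 2 μ) (hf0 : ¬ (f =ᵐ[μ] 0))
    (ε ε' : ℝ) (hε0 : 0 ≤ ε) (hε1 : ε < 1) (hε'0 : 0 ≤ ε') (hε'1 : ε' < 1)
    (hsum : ε + ε' < 1)
    (hconc : eLpNorm (f - E.indicator f) 2 μ ≤ ENNReal.ofReal ε * eLpNorm f 2 μ)
    (hspec : eLpNorm
        (f - fun x => ∑ j ∈ XS, (∫ y, f y * (starRingEnd ℂ) (e j y) ∂μ) * e j x) 2 μ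
      ≤ ENNReal.ofReal ε' * eLpNorm f 2 μ) :
    (1 - ε - ε') ^ 2 ≤ (μ E).toReal * (CM * ∑ k, μs k ^ (d - 1)) := by
  classical
  set g : M → ℂ := fun x => ∑ j ∈ XS, (∫ y, f y * (starRingEnd ℂ) (e j y) ∂μ) * e j x
    with hg_def
  set c : J → ℂ := fun j => ∫ y, f y * (starRingEnd ℂ) (e j y) ∂μ with hc_def
  have hgc : g = fun x => ∑ j ∈ XS, c j * e j x := rfl
  have hg : MemLp g 2 μ := by
    rw [hgc]
    exact memLp_finset_sum XS (fun j _ => (he2 j).const_mul (c j))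
  have hfinf : eLpNorm f 2 μ ≠ ⊤ := hf.2.ne
  have hfing : eLpNorm (E.indicator g) 2 μ ≠ ⊤ := ((eLpNorm_indicator_le g).trans_lt hg.2).ne
  -- triangle inequalities
  have step1 : eLpNorm f 2 μ ≤ eLpNorm (f - E.indicator f) 2 μ + eLpNorm (E.indicator f) 2 μ := by
    have hdecomp : f = (f - E.indicator f) + E.indicator f := by
      funext x; simp
    conv_lhs => rw [hdecomp]
    exact eLpNorm_add_le (hf.1.sub (hf.1.indicator hE)) (hf.1.indicator hE) one_le_two
  have step2 : eLpNorm (E.indicator f) 2 μ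
      ≤ eLpNorm (E.indicator g) 2 μ + eLpNorm (f - g) 2 μ := by
    have hind : E.indicator f = E.indicator g + E.indicator (f - g) := by
      funext x
      by_cases hx : x ∈ E
      · simp only [Pi.add_apply, Set.indicator_of_mem hx, Pi.sub_apply]; ring
      · simp [Set.indicator_of_notMem hx]
    calc eLpNorm (E.indicator f) 2 μ
        ≤ eLpNorm (E.indicator g) 2 μ + eLpNorm (E.indicator (f - g)) 2 μ := by
          rw [hind]
          exact eLpNorm_add_le (hg.1.indicator hE) ((hf.sub hg).1.indicator hE) one_le_two
      _ ≤ _ := add_le_add_right (eLpNorm_indicator_le _) _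
  have hcomb : eLpNorm f 2 μ ≤ ENNReal.ofReal ε * eLpNorm f 2 μ +
      (eLpNorm (E.indicator g) 2 μ + ENNReal.ofReal ε' * eLpNorm f 2 μ) :=
    step1.trans (add_le_add hconc (step2.trans (add_le_add_right hspec _)))
  set Nf := (eLpNorm f 2 μ).toReal with hNf_def
  set Ni := (eLpNorm (E.indicator g) 2 μ).toReal with hNi_def
  have hNfpos : 0 < Nf := by
    refine ENNReal.toReal_pos (fun h0 => hf0 ?_) hfinf
    exact (eLpNorm_eq_zero_iff hf.1 (by norm_num)).mp h0
  have hmulfin : ∀ r : ℝ, ENNReal.ofReal r * eLpNorm f 2 μ ≠ ⊤ :=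
    fun r => ENNReal.mul_ne_top ENNReal.ofReal_ne_top hfinf
  have hreal1 : Nf ≤ ε * Nf + (Ni + ε' * Nf) := by
    have h := ENNReal.toReal_mono
      (by
        refine ENNReal.add_ne_top.mpr ⟨hmulfin ε, ENNReal.add_ne_top.mpr ⟨hfing, hmulfin ε'⟩⟩)
      hcomb
    rwa [ENNReal.toReal_add (hmulfin ε) (ENNReal.add_ne_top.mpr ⟨hfing, hmulfin ε'⟩),
      ENNReal.toReal_add hfing (hmulfin ε'), ENNReal.toReal_mul, ENNReal.toReal_mul,
      ENNReal.toReal_ofReal hε0, ENNReal.toReal_ofReal hε'0] at h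
  have hlow : (1 - ε - ε') * Nf ≤ Ni := by
    have hexp : (1 - ε - ε') * Nf = Nf - ε * Nf - ε' * Nf := by ring
    linarith
  -- Bessel's inequality
  have hbessel : ∑ j ∈ XS, ‖c j‖ ^ 2 ≤ Nf ^ 2 := by
    set F : Lp ℂ 2 μ := hf.toLp f with hF_def
    set Ej : J → Lp ℂ 2 μ := fun j => (he2 j).toLp (e j) with hEj_def
    have hinner_ej : ∀ i j, @inner ℂ _ _ (Ej i) (Ej j) = if i = j then (1 : ℂ) else 0 := by
      intro i j
      rw [MeasureTheory.L2.inner_def]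
      have h1 : ∫ x, @inner ℂ _ _ ((Ej i) x) ((Ej j) x) ∂μ
          = ∫ x, (starRingEnd ℂ) (e i x * (starRingEnd ℂ) (e j x)) ∂μ := by
        refine integral_congr_ae ?_
        filter_upwards [(he2 i).coeFn_toLp, (he2 j).coeFn_toLp] with x h1 h2
        rw [RCLike.inner_apply, h1, h2]
        simp [mul_comm]
      rw [h1, integral_conj, horth]
      split <;> simp
    have honb : Orthonormal ℂ Ej := orthonormal_iff_ite.mpr hinner_ej
    have hcF : ∀ j, @inner ℂ _ _ (Ej j) F = c j := by
      intro j
      rw [MeasureTheory.L2.inner_def]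
      refine integral_congr_ae ?_
      filter_upwards [(he2 j).coeFn_toLp, hf.coeFn_toLp] with x h1 h2
      rw [RCLike.inner_apply, h1, h2]
    have h := honb.sum_inner_products_le (s := XS) F
    simp only [hcF] at h
    rwa [hF_def, Lp.norm_toLp f hf, ← hNf_def] at h
  -- pointwise bound
  have hBnn : 0 ≤ CM * ∑ k, μs k ^ (d - 1) :=
    mul_nonneg hCM.le (Finset.sum_nonneg fun k _ =>
      pow_nonneg (le_trans zero_le_one (hμs k)) _)
  have hsub : XS ⊆ Finset.univ.biUnion (fun k : Fin n => clus (μs k)) := by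
    intro j hj
    have hmem : lam j ∈ ⋃ k, Set.Icc (μs k) (μs k + 1) :=
      hS (Finset.mem_coe.mpr ((hXS j).mp hj))
    obtain ⟨k, hk⟩ := Set.mem_iUnion.mp hmem
    exact Finset.mem_biUnion.mpr ⟨k, Finset.mem_univ k, (hclus _ j).mpr hk⟩
  have haeK : ∀ᵐ x ∂μ, ‖g x‖ ^ 2
      ≤ (∑ j ∈ XS, ‖c j‖ ^ 2) * (CM * ∑ k, μs k ^ (d - 1)) := by
    have hall : ∀ᵐ x ∂μ, ∀ k : Fin n,
        ∑ j ∈ clus (μs k), ‖e j x‖ ^ 2 ≤ CM * μs k ^ (d - 1) :=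
      ae_all_iff.mpr fun k => hcluster _ (le_trans zero_le_one (hμs k))
    filter_upwards [hall] with x hx
    have h1 : ‖g x‖ ≤ ∑ j ∈ XS, ‖c j‖ * ‖e j x‖ := by
      rw [hgc]
      refine (norm_sum_le _ _).trans ?_
      exact Finset.sum_le_sum fun j _ => le_of_eq (norm_mul _ _)
    have h2 : (∑ j ∈ XS, ‖c j‖ * ‖e j x‖) ^ 2
        ≤ (∑ j ∈ XS, ‖c j‖ ^ 2) * (∑ j ∈ XS, ‖e j x‖ ^ 2) :=
      Finset.sum_mul_sq_le_sq_mul_sq _ _ _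
    have h3 : ∑ j ∈ XS, ‖e j x‖ ^ 2 ≤ CM * ∑ k, μs k ^ (d - 1) := by
      calc ∑ j ∈ XS, ‖e j x‖ ^ 2
          ≤ ∑ j ∈ Finset.univ.biUnion (fun k : Fin n => clus (μs k)), ‖e j x‖ ^ 2 :=
            Finset.sum_le_sum_of_subset_of_nonneg hsub (fun j _ _ => sq_nonneg _)
        _ ≤ ∑ k : Fin n, ∑ j ∈ clus (μs k), ‖e j x‖ ^ 2 :=
            sum_biUnion_le_aux _ _ _ (fun j => sq_nonneg _)
        _ ≤ ∑ k : Fin n, CM * μs k ^ (d - 1) := Finset.sum_le_sum fun k _ => hx k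
        _ = CM * ∑ k, μs k ^ (d - 1) := by rw [Finset.mul_sum]
    calc ‖g x‖ ^ 2 ≤ (∑ j ∈ XS, ‖c j‖ * ‖e j x‖) ^ 2 :=
          pow_le_pow_left₀ (norm_nonneg _) h1 2
      _ ≤ (∑ j ∈ XS, ‖c j‖ ^ 2) * (∑ j ∈ XS, ‖e j x‖ ^ 2) := h2
      _ ≤ _ := mul_le_mul_of_nonneg_left h3 (Finset.sum_nonneg fun j _ => sq_nonneg _)
  set K := (∑ j ∈ XS, ‖c j‖ ^ 2) * (CM * ∑ k, μs k ^ (d - 1)) with hK_def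
  have hKnn : 0 ≤ K :=
    mul_nonneg (Finset.sum_nonneg fun j _ => sq_nonneg _) hBnn
  have hsq : eLpNorm (E.indicator g) 2 μ ^ 2 ≤ ENNReal.ofReal K * μ E := by
    have hpt : ∀ᵐ x ∂μ, (‖E.indicator g x‖₊ : ENNReal) ^ (2 : ℝ)
        ≤ E.indicator (fun _ => ENNReal.ofReal K) x := by
      filter_upwards [haeK] with x hx
      by_cases hxE : x ∈ E
      · rw [Set.indicator_of_mem hxE, Set.indicator_of_mem hxE,
          ← enorm_eq_nnnorm, ← ofReal_norm,
          ENNReal.ofReal_rpow_of_nonneg (norm_nonneg _) (by norm_num : (0:ℝ) ≤ 2)]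
        apply ENNReal.ofReal_le_ofReal
        have : ‖g x‖ ^ (2 : ℝ) = ‖g x‖ ^ 2 := by
          rw [show ((2 : ℝ) = ((2 : ℕ) : ℝ)) by norm_num, Real.rpow_natCast]
        rw [this]
        exact hx
      · simp [Set.indicator_of_notMem hxE]
    have h2' : eLpNorm (E.indicator g) 2 μ ^ 2
        = ∫⁻ x, (‖E.indicator g x‖₊ : ENNReal) ^ (2 : ℝ) ∂μ := by
      rw [eLpNorm_eq_lintegral_rpow_enorm_toReal (by norm_num) (by norm_num)]
      rw [← ENNReal.rpow_natCast _ 2, ← ENNReal.rpow_mul]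
      norm_num
      rfl
    calc eLpNorm (E.indicator g) 2 μ ^ 2
        = ∫⁻ x, (‖E.indicator g x‖₊ : ENNReal) ^ (2 : ℝ) ∂μ := h2'
      _ ≤ ∫⁻ x, E.indicator (fun _ => ENNReal.ofReal K) x ∂μ := lintegral_mono_ae hpt
      _ = ENNReal.ofReal K * μ E := by
          rw [lintegral_indicator hE, setLIntegral_const]
  have hNi2 : Ni ^ 2 ≤ K * (μ E).toReal := by
    have h := ENNReal.toReal_mono (ENNReal.mul_ne_top ENNReal.ofReal_ne_top hEfin.ne) hsq
    rwa [ENNReal.toReal_pow, ENNReal.toReal_mul, ENNReal.toReal_ofReal hKnn] at h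
  have h1e : 0 ≤ 1 - ε - ε' := by linarith
  have hfin2 : (1 - ε - ε') ^ 2 * Nf ^ 2 ≤ Ni ^ 2 := by
    have h := pow_le_pow_left₀ (mul_nonneg h1e hNfpos.le) hlow 2
    calc (1 - ε - ε') ^ 2 * Nf ^ 2 = ((1 - ε - ε') * Nf) ^ 2 := by ring
      _ ≤ Ni ^ 2 := h
  have hK_le : K ≤ Nf ^ 2 * (CM * ∑ k, μs k ^ (d - 1)) :=
    mul_le_mul_of_nonneg_right hbessel hBnn
  have hmain : (1 - ε - ε') ^ 2 * Nf ^ 2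
      ≤ ((μ E).toReal * (CM * ∑ k, μs k ^ (d - 1))) * Nf ^ 2 := by
    calc (1 - ε - ε') ^ 2 * Nf ^ 2 ≤ Ni ^ 2 := hfin2
      _ ≤ K * (μ E).toReal := hNi2
      _ ≤ (Nf ^ 2 * (CM * ∑ k, μs k ^ (d - 1))) * (μ E).toReal :=
          mul_le_mul_of_nonneg_right hK_le ENNReal.toReal_nonneg
      _ = ((μ E).toReal * (CM * ∑ k, μs k ^ (d - 1))) * Nf ^ 2 := by ring
  exact le_of_mul_le_mul_right hmain (pow_pos hNfpos 2)
end

section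
/- Let $(M, \mu)$ be a measure space with $0 < \mu(M) < \infty$, let $m \geq 1$, let $(e_j)_{j \in J}$ be an orthonormal family in $L^2(M, \mu)$ with a joint eigenvalue map $\lambda : J \to \mathbb{R}^m$ such that each level set $\{j : \lambda_j = s\}$ is finite, and suppose that for every $s \in \mathbb{R}^m$ in the range of $\lambda$, the function $x \mapsto \sum_{j : \lambda_j = s} |e_j(x)|^2$ is constant $\mu$-almost everywhere. Let $S$ be a finite subset of the range of $\lambda$, let $X_S = \{j : \lambda_j \in S\}$, and let $E \subset M$ be measurable. Suppose $f \in L^2(M,\mu)$ is not almost everywhere zero and satisfies $\|f - 1_E f\|_{L^2} \leq \epsilon \|f\|_{L^2}$ and $\|f - \sum_{j \in X_S} \langle f, e_j\rangle e_j\|_{L^2} \leq \epsilon' \|f\|_{L^2}$, with $0 \leq \epsilon, \epsilon' < 1$ and $\epsilon + \epsilon' < 1$. Then $\# X_S \cdot \frac{\mu(E)}{\mu(M)} \geq (1 - \epsilon - \epsilon')^2$. -/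
open MeasureTheory

/-- Joint-spectrum uncertainty principle: let `(e_j)` be an orthonormal family with joint
eigenvalue map `λ : J → ℝ^m` whose level sets `T s = {j : λ_j = s}` are finite, such that
`∑_{λ_j = s} |e_j(x)|²` is a.e. constant for every `s` in the range of `λ`. If a nonzero
`f ∈ L²` is `L²`-concentrated on `E` and spectrally concentrated on
`X_S = {j : λ_j ∈ S}`, then `#X_S ⬝ μ(E)/μ(M) ≥ (1-ε-ε')²`. -/
theorem statement14 {M J : Type*} [MeasurableSpace M] [DecidableEq J] (μ : Measure M)
    (hM0 : 0 < μ Set.univ) (hMfin : μ Set.univ < ⊤)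
    (m : ℕ) (hm : 1 ≤ m)
    (e : J → M → ℂ) (lam : J → (Fin m → ℝ))
    (he2 : ∀ j, MemLp (e j) 2 μ)
    (horth : ∀ i j, ∫ x, e i x * (starRingEnd ℂ) (e j x) ∂μ = if i = j then 1 else 0)
    (T : (Fin m → ℝ) → Finset J) (hT : ∀ s j, j ∈ T s ↔ lam j = s)
    (hhom : ∀ s ∈ Set.range lam, ∃ c : ℝ, ∀ᵐ x ∂μ, ∑ j ∈ T s, ‖e j x‖ ^ 2 = c)
    (S : Finset (Fin m → ℝ)) (hS : ↑S ⊆ Set.range lam)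
    (XS : Finset J) (hXS : ∀ j, j ∈ XS ↔ lam j ∈ S)
    (E : Set M) (hE : MeasurableSet E)
    (f : M → ℂ) (hf : MemLp f 2 μ) (hf0 : ¬ (f =ᵐ[μ] 0))
    (ε ε' : ℝ) (hε0 : 0 ≤ ε) (hε1 : ε < 1) (hε'0 : 0 ≤ ε') (hε'1 : ε' < 1)
    (hsum : ε + ε' < 1)
    (hconc : eLpNorm (f - E.indicator f) 2 μ ≤ ENNReal.ofReal ε * eLpNorm f 2 μ)
    (hspec : eLpNorm
        (f - fun x => ∑ j ∈ XS, (∫ y, f y * (starRingEnd ℂ) (e j y) ∂μ) * e j x) 2 μ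
      ≤ ENNReal.ofReal ε' * eLpNorm f 2 μ) :
    (1 - ε - ε') ^ 2 ≤ (XS.card : ℝ) * ((μ E).toReal / (μ Set.univ).toReal) := by
  classical
  -- notation
  set a : J → ℂ := fun j => ∫ y, f y * (starRingEnd ℂ) (e j y) ∂μ with ha
  set P : M → ℂ := fun x => ∑ j ∈ XS, a j * e j x with hPdef
  have hP : MemLp P 2 μ :=
    memLp_finset_sum XS (fun j _ => (he2 j).const_mul (a j))
  set g : M → ℂ := E.indicator P with hgdef
  have hg : MemLp g 2 μ := hP.indicator hE
  set N : ℝ := (eLpNorm f 2 μ).toReal with hNdef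
  have hfin : eLpNorm f 2 μ ≠ ⊤ := hf.2.ne
  have hN0 : 0 < N := by
    have h1 : eLpNorm f 2 μ ≠ 0 := by
      rw [Ne, eLpNorm_eq_zero_iff hf.aestronglyMeasurable (by norm_num)]
      exact hf0
    exact ENNReal.toReal_pos h1 hfin
  -- the function K
  set K : M → ℝ := fun x => ∑ j ∈ XS, ‖e j x‖ ^ 2 with hKdef
  have hKint : Integrable K μ := by
    apply integrable_finset_sum
    intro j _
    exact (he2 j).norm.integrable_sq
  have hej1 : ∀ j, ∫ x, ‖e j x‖ ^ 2 ∂μ = 1 := by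
    intro j
    have h1 := horth j j
    rw [if_pos rfl] at h1
    have h2 : ∀ x, e j x * (starRingEnd ℂ) (e j x) = ((‖e j x‖ ^ 2 : ℝ) : ℂ) := by
      intro x
      simp [Complex.mul_conj, Complex.normSq_eq_norm_sq]
    rw [show (fun x => e j x * (starRingEnd ℂ) (e j x))
        = fun x => ((‖e j x‖ ^ 2 : ℝ) : ℂ) from funext h2] at h1
    have h3 : ∫ x, ((‖e j x‖ ^ 2 : ℝ) : ℂ) ∂μ = ((∫ x, ‖e j x‖ ^ 2 ∂μ : ℝ) : ℂ) :=
      integral_ofReal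
    rw [h3] at h1
    exact_mod_cast h1
  have hKtot : ∫ x, K x ∂μ = (XS.card : ℝ) := by
    rw [hKdef]
    rw [integral_finset_sum _ (fun j _ => (he2 j).norm.integrable_sq)]
    simp only [hej1, Finset.sum_const, nsmul_eq_mul, mul_one]
  -- K is a.e. constant
  obtain ⟨c, hKc⟩ : ∃ c : ℝ, ∀ᵐ x ∂μ, K x = c := by
    have key : ∀ s ∈ S, ∃ c : ℝ, ∀ᵐ x ∂μ, ∑ j ∈ T s, ‖e j x‖ ^ 2 = c :=
      fun s hs => hhom s (hS hs)
    choose! cS hcS using key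
    have hXSb : XS = S.biUnion T := by
      ext j
      simp only [Finset.mem_biUnion, hXS, hT]
      constructor
      · intro h; exact ⟨lam j, h, rfl⟩
      · rintro ⟨s, hs, rfl⟩; exact hs
    have hdisj : ∀ s ∈ S, ∀ t ∈ S, s ≠ t → Disjoint (T s) (T t) := by
      intro s _ t _ hst
      rw [Finset.disjoint_left]
      intro j hjs hjt
      exact hst (((hT s j).1 hjs).symm.trans ((hT t j).1 hjt))
    have hae : ∀ᵐ x ∂μ, ∀ s ∈ (S : Set (Fin m → ℝ)), ∑ j ∈ T s, ‖e j x‖ ^ 2 = cS s :=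
      (ae_ball_iff S.countable_toSet).2 (fun s hs => hcS s hs)
    refine ⟨∑ s ∈ S, cS s, ?_⟩
    filter_upwards [hae] with x hx
    rw [hKdef]
    simp only
    rw [hXSb, Finset.sum_biUnion hdisj]
    exact Finset.sum_congr rfl hx
  have hcval : (XS.card : ℝ) = c * (μ Set.univ).toReal := by
    rw [← hKtot, integral_congr_ae hKc, integral_const, smul_eq_mul, mul_comm]
    rfl
  have hμM : 0 < (μ Set.univ).toReal := ENNReal.toReal_pos hM0.ne' hMfin.ne
  have hc0 : 0 ≤ c := by
    nlinarith [Nat.cast_nonneg (α := ℝ) XS.card]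
  -- Bessel
  set B : ℝ := ∑ j ∈ XS, ‖a j‖ ^ 2 with hBdef
  have hinner : ∀ (u v : M → ℂ) (hu : MemLp u 2 μ) (hv : MemLp v 2 μ),
      (inner ℂ (hu.toLp u) (hv.toLp v) : ℂ) = ∫ x, (starRingEnd ℂ) (u x) * v x ∂μ := by
    intro u v hu hv
    rw [MeasureTheory.L2.inner_def]
    apply integral_congr_ae
    filter_upwards [hu.coeFn_toLp, hv.coeFn_toLp] with x hx hy
    rw [hx, hy, RCLike.inner_apply, mul_comm]
  have hBessel : B ≤ N ^ 2 := by
    set F : Lp ℂ 2 μ := hf.toLp f with hF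
    set Ej : J → Lp ℂ 2 μ := fun j => (he2 j).toLp (e j) with hEj
    have hon : Orthonormal ℂ Ej := by
      rw [orthonormal_iff_ite]
      intro i j
      rw [hEj]
      simp only
      rw [hinner _ _ (he2 i) (he2 j)]
      have h1 : ∫ x, (starRingEnd ℂ) (e i x) * e j x ∂μ
          = ∫ x, e j x * (starRingEnd ℂ) (e i x) ∂μ := by
        congr 1; funext x; ring
      rw [h1, horth j i]
      by_cases h : i = j <;> simp [h, Ne.symm, h]
    have haj : ∀ j, a j = inner ℂ (Ej j) F := by
      intro j
      rw [hEj]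
      simp only
      rw [hF, hinner _ _ (he2 j) hf, ha]
      simp only
      congr 1; funext x; ring
    have hb := hon.sum_inner_products_le (s := XS) F
    have hFN : ‖F‖ = N := by rw [hF, hNdef]; exact MeasureTheory.Lp.norm_toLp f hf
    rw [hBdef]
    calc ∑ j ∈ XS, ‖a j‖ ^ 2 = ∑ j ∈ XS, ‖(inner ℂ (Ej j) F : ℂ)‖ ^ 2 := by
          exact Finset.sum_congr rfl fun j _ => by rw [haj j]
      _ ≤ ‖F‖ ^ 2 := hb
      _ = N ^ 2 := by rw [hFN]
  have hB0 : 0 ≤ B := Finset.sum_nonneg fun j _ => by positivity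
  -- Step A : concentration lower bound for the norm of g
  set A : ℝ := (eLpNorm g 2 μ).toReal with hAdef
  have hA0 : 0 ≤ A := ENNReal.toReal_nonneg
  have hstepA : (1 - ε - ε') * N ≤ A := by
    have hfi : MemLp (f - E.indicator f) 2 μ := hf.sub (hf.indicator hE)
    have hfP : MemLp (f - P) 2 μ := hf.sub hP
    have hfPi : MemLp (E.indicator (f - P)) 2 μ := hfP.indicator hE
    have hdecomp : f = (f - E.indicator f) + (E.indicator (f - P) + g) := by
      funext x
      simp only [Pi.add_apply, Pi.sub_apply]
      by_cases hx : x ∈ E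
      · rw [hgdef]
        simp [Set.indicator_of_mem hx]
      · rw [hgdef]
        simp [Set.indicator_of_notMem hx]
    have htri : eLpNorm f 2 μ ≤ ENNReal.ofReal ε * eLpNorm f 2 μ
        + (ENNReal.ofReal ε' * eLpNorm f 2 μ + eLpNorm g 2 μ) := by
      calc eLpNorm f 2 μ
          = eLpNorm ((f - E.indicator f) + (E.indicator (f - P) + g)) 2 μ := by
            rw [← hdecomp]
        _ ≤ eLpNorm (f - E.indicator f) 2 μ + eLpNorm (E.indicator (f - P) + g) 2 μ :=
            eLpNorm_add_le hfi.aestronglyMeasurable (hfPi.add hg).aestronglyMeasurable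
              one_le_two
        _ ≤ eLpNorm (f - E.indicator f) 2 μ
            + (eLpNorm (E.indicator (f - P)) 2 μ + eLpNorm g 2 μ) := by
            exact add_le_add_right
              (eLpNorm_add_le hfPi.aestronglyMeasurable hg.aestronglyMeasurable one_le_two) _
        _ ≤ ENNReal.ofReal ε * eLpNorm f 2 μ
            + (ENNReal.ofReal ε' * eLpNorm f 2 μ + eLpNorm g 2 μ) := by
            refine add_le_add hconc (add_le_add ?_ le_rfl)
            exact le_trans (eLpNorm_indicator_le _) hspec
    have hfin1 : ENNReal.ofReal ε * eLpNorm f 2 μ ≠ ⊤ :=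
      ENNReal.mul_ne_top ENNReal.ofReal_ne_top hfin
    have hfin2 : ENNReal.ofReal ε' * eLpNorm f 2 μ ≠ ⊤ :=
      ENNReal.mul_ne_top ENNReal.ofReal_ne_top hfin
    have hAfin : eLpNorm g 2 μ ≠ ⊤ := hg.2.ne
    have h5 := ENNReal.toReal_mono
      (ENNReal.add_ne_top.2 ⟨hfin1, ENNReal.add_ne_top.2 ⟨hfin2, hAfin⟩⟩) htri
    rw [ENNReal.toReal_add hfin1 (ENNReal.add_ne_top.2 ⟨hfin2, hAfin⟩),
      ENNReal.toReal_add hfin2 hAfin, ENNReal.toReal_mul, ENNReal.toReal_mul,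
      ENNReal.toReal_ofReal hε0, ENNReal.toReal_ofReal hε'0] at h5
    rw [← hNdef, ← hAdef] at h5
    nlinarith [h5]
  -- Step B : pointwise Cauchy-Schwarz bound
  have hstepB : A ^ 2 ≤ B * (c * (μ E).toReal) := by
    have hI0 : 0 ≤ ∫ x, ‖g x‖ ^ 2 ∂μ := integral_nonneg fun x => by positivity
    have hA2 : A ^ 2 = ∫ x, ‖g x‖ ^ 2 ∂μ := by
      rw [hAdef, hg.eLpNorm_eq_integral_rpow_norm (by norm_num) (by norm_num)]
      rw [show ENNReal.toReal 2 = (2 : ℝ) by norm_num]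
      have hint : (∫ x, ‖g x‖ ^ (2 : ℝ) ∂μ) = ∫ x, ‖g x‖ ^ 2 ∂μ := by
        congr 1
        funext x
        rw [show ((2 : ℝ)) = ((2 : ℕ) : ℝ) by norm_num, Real.rpow_natCast]
      rw [hint, show (2 : ℝ)⁻¹ = 1 / 2 by norm_num, ← Real.sqrt_eq_rpow,
        ENNReal.toReal_ofReal (Real.sqrt_nonneg _), Real.sq_sqrt hI0]
    have hgind : (fun x => ‖g x‖ ^ 2) = E.indicator fun x => ‖P x‖ ^ 2 := by
      funext x
      by_cases hx : x ∈ E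
      · rw [hgdef]
        simp [Set.indicator_of_mem hx]
      · rw [hgdef]
        simp [Set.indicator_of_notMem hx]
    have hPK : ∀ x, ‖P x‖ ^ 2 ≤ B * K x := by
      intro x
      have h1 : ‖P x‖ ≤ ∑ j ∈ XS, ‖a j‖ * ‖e j x‖ := by
        calc ‖P x‖ ≤ ∑ j ∈ XS, ‖a j * e j x‖ := norm_sum_le _ _
          _ = ∑ j ∈ XS, ‖a j‖ * ‖e j x‖ := by simp [norm_mul]
      have h2 : (∑ j ∈ XS, ‖a j‖ * ‖e j x‖) ^ 2
          ≤ (∑ j ∈ XS, ‖a j‖ ^ 2) * ∑ j ∈ XS, ‖e j x‖ ^ 2 :=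
        Finset.sum_mul_sq_le_sq_mul_sq XS _ _
      calc ‖P x‖ ^ 2 ≤ (∑ j ∈ XS, ‖a j‖ * ‖e j x‖) ^ 2 :=
            pow_le_pow_left₀ (norm_nonneg _) h1 2
        _ ≤ B * K x := h2
    have hIP : Integrable (fun x => ‖P x‖ ^ 2) (μ.restrict E) :=
      (hP.norm.integrable_sq).restrict
    have hIK : Integrable (fun x => B * K x) (μ.restrict E) :=
      (hKint.const_mul B).restrict
    have hKE : ∫ x in E, K x ∂μ = c * (μ E).toReal := by
      rw [integral_congr_ae (ae_restrict_of_ae hKc), setIntegral_const, smul_eq_mul,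
        mul_comm]
      rfl
    calc A ^ 2 = ∫ x, ‖g x‖ ^ 2 ∂μ := hA2
      _ = ∫ x in E, ‖P x‖ ^ 2 ∂μ := by rw [hgind, integral_indicator hE]
      _ ≤ ∫ x in E, B * K x ∂μ := integral_mono hIP hIK hPK
      _ = B * ∫ x in E, K x ∂μ := integral_const_mul _ _
      _ = B * (c * (μ E).toReal) := by rw [hKE]
  -- conclusion
  have hμE : 0 ≤ (μ E).toReal := ENNReal.toReal_nonneg
  have hδ : 0 ≤ 1 - ε - ε' := by linarith
  have h1 : (1 - ε - ε') ^ 2 * N ^ 2 ≤ N ^ 2 * (c * (μ E).toReal) := by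
    calc (1 - ε - ε') ^ 2 * N ^ 2 = ((1 - ε - ε') * N) ^ 2 := by ring
      _ ≤ A ^ 2 := pow_le_pow_left₀ (mul_nonneg hδ hN0.le) hstepA 2
      _ ≤ B * (c * (μ E).toReal) := hstepB
      _ ≤ N ^ 2 * (c * (μ E).toReal) :=
          mul_le_mul_of_nonneg_right hBessel (mul_nonneg hc0 hμE)
  have hN2 : 0 < N ^ 2 := by positivity
  have h2 : (1 - ε - ε') ^ 2 ≤ c * (μ E).toReal := by
    nlinarith [h1, hN2]
  have h3 : c = (XS.card : ℝ) / (μ Set.univ).toReal := by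
    field_simp at hcval ⊢
    linarith
  rw [h3] at h2
  calc (1 - ε - ε') ^ 2 ≤ (XS.card : ℝ) / (μ Set.univ).toReal * (μ E).toReal := h2
    _ = (XS.card : ℝ) * ((μ E).toReal / (μ Set.univ).toReal) := by ring
end
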